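/- Let G = ⟨v₁, v₂, h | [v₁,h], [v₂,h], [v₁,v₂]h^{-b}⟩ with b a positive integer, and let φ : G → ℤ/2 be the homomorphism determined by φ(v₁) = 1, φ(v₂) = 0, φ(h) = 0. Then the kernel of φ is isomorphic to the group ⟨w₁, w₂, k | [w₁,k], [w₂,k], [w₁,w₂]k^{-2b}⟩, i.e. to the fundamental group of M_T(2b). -/

import Mathlib

/-- Relations of the fundamental group of `M_T(b)`:
generators `v₁ = 0`, `v₂ = 1`, `h = 2`; relations `[v₁,h]`, `[v₂,h]`, `[v₁,v₂]h^{-b}`. -/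
def relsT (b : ℤ) : Set (FreeGroup (Fin 3)) :=
  { .of 0 * .of 2 * (.of 0)⁻¹ * (.of 2)⁻¹,
    .of 1 * .of 2 * (.of 1)⁻¹ * (.of 2)⁻¹,
    .of 0 * .of 1 * (.of 0)⁻¹ * (.of 1)⁻¹ * (.of 2) ^ (-b) }

namespace MTCover

/-- Concrete Heisenberg-type model of `π₁(M_T(b))`. -/
@[ext] structure Hb (b : ℤ) where
  x : ℤ
  y : ℤ
  z : ℤ

variable {b : ℤ}

instance : Mul (Hb b) := ⟨fun u v => ⟨u.x + v.x, u.y + v.y, u.z + v.z - b * v.x * u.y⟩⟩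
instance : One (Hb b) := ⟨⟨0, 0, 0⟩⟩
instance : Inv (Hb b) := ⟨fun u => ⟨-u.x, -u.y, -u.z - b * u.x * u.y⟩⟩

@[simp] lemma mul_x (u v : Hb b) : (u * v).x = u.x + v.x := rfl
@[simp] lemma mul_y (u v : Hb b) : (u * v).y = u.y + v.y := rfl
@[simp] lemma mul_z (u v : Hb b) : (u * v).z = u.z + v.z - b * v.x * u.y := rfl
@[simp] lemma one_x : (1 : Hb b).x = 0 := rfl
@[simp] lemma one_y : (1 : Hb b).y = 0 := rfl
@[simp] lemma one_z : (1 : Hb b).z = 0 := rfl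
@[simp] lemma inv_x (u : Hb b) : (u⁻¹).x = -u.x := rfl
@[simp] lemma inv_y (u : Hb b) : (u⁻¹).y = -u.y := rfl
@[simp] lemma inv_z (u : Hb b) : (u⁻¹).z = -u.z - b * u.x * u.y := rfl

instance : Group (Hb b) :=
  Group.ofLeftAxioms
    (fun u v w => by ext <;> simp <;> ring)
    (fun u => by ext <;> simp)
    (fun u => by ext <;> simp <;> ring)

def X : Hb b := ⟨1, 0, 0⟩
def Y : Hb b := ⟨0, 1, 0⟩
def Z : Hb b := ⟨0, 0, 1⟩

lemma X_zpow (m : ℤ) : (X : Hb b) ^ m = ⟨m, 0, 0⟩ := by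
  induction m using Int.induction_on with
  | zero => rw [zpow_zero]; rfl
  | succ n ih => rw [zpow_add_one, ih]; ext <;> simp [X]
  | pred n ih => rw [zpow_sub_one, ih]; ext <;> simp [X] <;> omega

lemma Y_zpow (m : ℤ) : (Y : Hb b) ^ m = ⟨0, m, 0⟩ := by
  induction m using Int.induction_on with
  | zero => rw [zpow_zero]; rfl
  | succ n ih => rw [zpow_add_one, ih]; ext <;> simp [Y]
  | pred n ih => rw [zpow_sub_one, ih]; ext <;> simp [Y] <;> omega

lemma Z_zpow (m : ℤ) : (Z : Hb b) ^ m = ⟨0, 0, m⟩ := by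
  induction m using Int.induction_on with
  | zero => rw [zpow_zero]; rfl
  | succ n ih => rw [zpow_add_one, ih]; ext <;> simp [Z]
  | pred n ih => rw [zpow_sub_one, ih]; ext <;> simp [Z] <;> omega

lemma decomp (u : Hb b) : u = X ^ u.x * Y ^ u.y * Z ^ u.z := by
  rw [X_zpow, Y_zpow, Z_zpow]; ext <;> simp

/-! ### The presented group side -/

abbrev G (b : ℤ) := PresentedGroup (relsT b)

def g1 : G b := .of 0
def g2 : G b := .of 1
def g3 : G b := .of 2

lemma mk_rel {r : FreeGroup (Fin 3)} (hr : r ∈ relsT b) :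
    PresentedGroup.mk (relsT b) r = 1 :=
  (QuotientGroup.eq_one_iff r).mpr (Subgroup.subset_normalClosure hr)

lemma rel1 : (g1 : G b) * g3 = g3 * g1 := by
  have h := mk_rel (b := b) (show _ ∈ relsT b from Set.mem_insert _ _)
  simp only [map_mul, map_inv] at h
  rw [mul_inv_eq_one, mul_inv_eq_iff_eq_mul] at h
  exact h

lemma rel2 : (g2 : G b) * g3 = g3 * g2 := by
  have h := mk_rel (b := b)
    (show _ ∈ relsT b from Set.mem_insert_iff.mpr (Or.inr (Set.mem_insert _ _)))
  simp only [map_mul, map_inv] at h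
  rw [mul_inv_eq_one, mul_inv_eq_iff_eq_mul] at h
  exact h

lemma rel3 : (g1 : G b) * g2 * g1⁻¹ * g2⁻¹ = g3 ^ b := by
  have h := mk_rel (b := b)
    (show _ ∈ relsT b from Set.mem_insert_iff.mpr (Or.inr
      (Set.mem_insert_iff.mpr (Or.inr rfl))))
  simp only [map_mul, map_inv, map_zpow] at h
  rw [zpow_neg, mul_inv_eq_one] at h
  exact h

lemma central (g : G b) : Commute (g3 : G b) g := by
  have hg : g ∈ Subgroup.centralizer ({g3} : Set (G b)) := by
    refine PresentedGroup.generated_by (relsT b) _ (fun j => ?_) g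
    rw [Subgroup.mem_centralizer_iff]
    rintro h ⟨rfl⟩
    fin_cases j
    · exact rel1.symm
    · exact rel2.symm
    · rfl
  exact (Subgroup.mem_centralizer_iff.mp hg g3 rfl)

lemma tmul (k : ℤ) (g : G b) : (g3 : G b) ^ k * g = g * g3 ^ k :=
  ((central g).zpow_left k).eq

/-- From `x * y = y * x * T` with `T` central, get the power version. -/
lemma conj_helper {G : Type*} [Group G] {x y T : G} (hT : ∀ g : G, Commute T g)
    (hxy : x * y = y * x * T) (m : ℤ) : x * y ^ m = y ^ m * x * T ^ m := by
  have hs : SemiconjBy x y (y * T) := by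
    show x * y = y * T * x
    rw [hxy, mul_assoc, mul_assoc, (hT x).eq]
  have h2 := hs.zpow_right m
  rw [SemiconjBy, (hT y).symm.mul_zpow] at h2
  rw [h2, mul_assoc, mul_assoc, ((hT x).zpow_left m).eq]

lemma base12 : (g1 : G b) * g2 = g2 * g1 * g3 ^ b := by
  have h := rel3 (b := b)
  rw [mul_inv_eq_iff_eq_mul, mul_inv_eq_iff_eq_mul] at h
  rw [h, mul_assoc]
  exact tmul b (g2 * g1)

lemma pow_swap (n m : ℤ) :
    (g2 : G b) ^ n * g1 ^ m = g1 ^ m * g2 ^ n * g3 ^ (-(b * n) * m) := by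
  have hT : ∀ g : G b, Commute (g3 ^ b) g := fun g => (central g).zpow_left b
  have h1 : (g1 : G b) * g2 ^ n = g2 ^ n * g1 * (g3 ^ b) ^ n :=
    conj_helper hT base12 n
  have h2 : (g2 : G b) ^ n * g1 = g1 * g2 ^ n * ((g3 ^ b) ^ n)⁻¹ := by
    rw [h1, mul_assoc, mul_inv_cancel, mul_one]
  have hT' : ∀ g : G b, Commute (((g3 ^ b) ^ n)⁻¹) g :=
    fun g => (((central g).zpow_left b).zpow_left n).inv_left
  have := conj_helper hT' h2 m
  rw [this, ← zpow_mul, ← zpow_neg, ← zpow_mul]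


/-! ### Moving pieces around -/

lemma tpush (k : ℤ) (g h : G b) : g3 ^ k * (g * h) = g * (g3 ^ k * h) := by
  rw [← mul_assoc, tmul, mul_assoc]

lemma sCA (n m : ℤ) (h : G b) :
    (g2 : G b) ^ n * (g1 ^ m * h) = g1 ^ m * (g2 ^ n * (g3 ^ (-(b * n) * m) * h)) := by
  rw [← mul_assoc, pow_swap n m, mul_assoc (g1 ^ m * g2 ^ n) _ h,
    mul_assoc (g1 ^ m) (g2 ^ n) _]

lemma collapse {H : Type*} [Group H] (g : H) (k l : ℤ) (h : H) :
    g ^ k * (g ^ l * h) = g ^ (k + l) * h := by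
  rw [← mul_assoc, ← zpow_add]

lemma sigma_aux (p q r s t w : ℤ) :
    ((g1 : G b) ^ p * g2 ^ q * g3 ^ r) * (g1 ^ s * g2 ^ t * g3 ^ w)
      = g1 ^ (p + s) * g2 ^ (q + t) * g3 ^ (r + w + -(b * q) * s) := by
  have h1 : ((g1 : G b) ^ p * g2 ^ q * g3 ^ r) * (g1 ^ s * g2 ^ t * g3 ^ w)
      = g1 ^ p * (g2 ^ q * (g3 ^ r * (g1 ^ s * (g2 ^ t * g3 ^ w)))) := by
    simp only [mul_assoc]
  rw [h1, tpush r (g1 ^ s) (g2 ^ t * g3 ^ w), tpush r (g2 ^ t) (g3 ^ w), ← zpow_add,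
    sCA q s (g2 ^ t * g3 ^ (r + w)), tpush (-(b * q) * s) (g2 ^ t) (g3 ^ (r + w)),
    ← zpow_add, collapse g1 p s, collapse g2 q t]
  have hE : -(b * q) * s + (r + w) = r + w + -(b * q) * s := by ring
  rw [hE, ← mul_assoc]

/-! ### The two homomorphisms -/

def fgen : Fin 3 → Hb b := fun i => if i = 0 then X else if i = 1 then Y else Z

lemma lift_rels : ∀ r ∈ relsT b, FreeGroup.lift (fgen (b := b)) r = 1 := by
  rintro r hr
  simp only [relsT, Set.mem_insert_iff, Set.mem_singleton_iff] at hr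
  rcases hr with rfl | rfl | rfl
  · simp only [map_mul, map_inv, FreeGroup.lift_apply_of]
    show (X : Hb b) * Z * X⁻¹ * Z⁻¹ = 1
    ext <;> simp [X, Z] <;> ring
  · simp only [map_mul, map_inv, FreeGroup.lift_apply_of]
    show (Y : Hb b) * Z * Y⁻¹ * Z⁻¹ = 1
    ext <;> simp [Y, Z] <;> ring
  · simp only [map_mul, map_inv, map_zpow, FreeGroup.lift_apply_of]
    show (X : Hb b) * Y * X⁻¹ * Y⁻¹ * Z ^ (-b) = 1
    rw [Z_zpow]
    ext <;> simp [X, Y] <;> ring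

def psi : G b →* Hb b := PresentedGroup.toGroup lift_rels

lemma psi_g1 : psi (g1 : G b) = X := PresentedGroup.toGroup.of lift_rels
lemma psi_g2 : psi (g2 : G b) = Y := PresentedGroup.toGroup.of lift_rels
lemma psi_g3 : psi (g3 : G b) = Z := PresentedGroup.toGroup.of lift_rels

def sigma : Hb b →* G b where
  toFun u := g1 ^ u.x * g2 ^ u.y * g3 ^ u.z
  map_one' := by simp
  map_mul' u v := by
    show g1 ^ (u.x + v.x) * g2 ^ (u.y + v.y) * g3 ^ (u.z + v.z - b * v.x * u.y) = _
    have hE : u.z + v.z - b * v.x * u.y = u.z + v.z + -(b * u.y) * v.x := by ring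
    rw [hE, ← sigma_aux]

lemma sigma_apply (u : Hb b) :
    sigma u = g1 ^ u.x * g2 ^ u.y * g3 ^ u.z := rfl

lemma comp1 : (sigma (b := b)).comp psi = MonoidHom.id (G b) := by
  apply PresentedGroup.ext
  intro i
  fin_cases i
  · show sigma (psi (g1 : G b)) = g1
    rw [psi_g1, sigma_apply]; simp [X]
  · show sigma (psi (g2 : G b)) = g2
    rw [psi_g2, sigma_apply]; simp [Y]
  · show sigma (psi (g3 : G b)) = g3
    rw [psi_g3, sigma_apply]; simp [Z]

lemma comp2 : (psi (b := b)).comp sigma = MonoidHom.id (Hb b) := by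
  apply MonoidHom.ext
  intro u
  show psi (sigma u) = u
  rw [sigma_apply, map_mul, map_mul, map_zpow, map_zpow, map_zpow,
    psi_g1, psi_g2, psi_g3, X_zpow, Y_zpow, Z_zpow]
  ext <;> simp

def iso : G b ≃* Hb b := MonoidHom.toMulEquiv psi sigma comp1 comp2

lemma iso_apply (g : G b) : iso g = psi g := rfl

lemma iso_symm_X : (iso (b := b)).symm X = g1 := by
  rw [MulEquiv.symm_apply_eq, iso_apply, psi_g1]
lemma iso_symm_Y : (iso (b := b)).symm Y = g2 := by
  rw [MulEquiv.symm_apply_eq, iso_apply, psi_g2]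
lemma iso_symm_Z : (iso (b := b)).symm Z = g3 := by
  rw [MulEquiv.symm_apply_eq, iso_apply, psi_g3]

/-! ### The doubling map -/

def dbl (b : ℤ) : Hb (2 * b) →* Hb b where
  toFun u := ⟨2 * u.x, u.y, u.z⟩
  map_one' := by ext <;> simp
  map_mul' u v := by ext <;> (dsimp; try ring)

lemma dbl_inj (b : ℤ) : Function.Injective (dbl b) := by
  intro u v huv
  have h1 := congrArg Hb.x huv
  have h2 := congrArg Hb.y huv
  have h3 := congrArg Hb.z huv
  simp only [dbl, MonoidHom.coe_mk, OneHom.coe_mk] at h1 h2 h3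
  ext <;> omega

lemma dbl_range (b : ℤ) (u : Hb b) : u ∈ (dbl b).range ↔ (2 : ℤ) ∣ u.x := by
  constructor
  · rintro ⟨w, rfl⟩
    exact ⟨w.x, rfl⟩
  · rintro ⟨k, hk⟩
    exact ⟨⟨k, u.y, u.z⟩, by ext <;> simp [dbl] <;> omega⟩

end MTCover

/-- The kernel of the epimorphism `π₁(M_T(b)) ↠ ℤ/2` with `φ(v₁) = 1`, `φ(v₂) = φ(h) = 0`
is the fundamental group of `M_T(2b)`. -/
theorem ker_MT_cover (b : ℕ) (hb : 0 < b)
    (φ : PresentedGroup (relsT b) →* Multiplicative (ZMod 2))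
    (h1 : φ (PresentedGroup.of 0) = Multiplicative.ofAdd 1)
    (h2 : φ (PresentedGroup.of 1) = 1) (h3 : φ (PresentedGroup.of 2) = 1) :
    Nonempty (φ.ker ≃* PresentedGroup (relsT (2 * b))) := by
  classical
  open MTCover in
  let B : ℤ := (b : ℤ)
  let e : MTCover.G B ≃* Hb B := MTCover.iso
  have hφ' : ∀ u : Hb B, φ (e.symm u) = Multiplicative.ofAdd ((u.x : ZMod 2)) := by
    intro u
    have hd : φ (e.symm u) = φ (e.symm (X ^ u.x * Y ^ u.y * Z ^ u.z)) := by
      rw [← MTCover.decomp]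
    rw [hd]
    simp only [map_mul, map_zpow]
    rw [MTCover.iso_symm_X, MTCover.iso_symm_Y, MTCover.iso_symm_Z]
    rw [show φ (MTCover.g1 : MTCover.G B) = Multiplicative.ofAdd 1 from h1,
      show φ (MTCover.g2 : MTCover.G B) = 1 from h2,
      show φ (MTCover.g3 : MTCover.G B) = 1 from h3,
      one_zpow, one_zpow, mul_one, mul_one, ← ofAdd_zsmul]
    congr 1
    rw [zsmul_eq_mul, mul_one]
  have hker : Subgroup.map e.toMonoidHom φ.ker = (MTCover.dbl B).range := by
    ext u
    rw [Subgroup.mem_map_equiv, MonoidHom.mem_ker, hφ' u, MTCover.dbl_range]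
    rw [show (Multiplicative.ofAdd ((u.x : ZMod 2)) = 1) ↔ ((u.x : ZMod 2) = 0) from
      by constructor <;> (intro h; exact h)]
    rw [show ((u.x : ZMod 2) = 0) ↔ ((2 : ℤ) ∣ u.x) from by
      simpa using ZMod.intCast_zmod_eq_zero_iff_dvd u.x 2]
  exact ⟨(e.subgroupMap φ.ker).trans ((MulEquiv.subgroupCongr hker).trans
    ((MonoidHom.ofInjective (MTCover.dbl_inj B)).symm.trans
      (MTCover.iso (b := 2 * B)).symm))⟩
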